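/- For vectors u, v in R^n embedded in the Clifford algebra with positive definite form, u and v are linearly dependent if and only if uv = vu in the Clifford algebra. -/

import Mathlib

open CliffordAlgebra
open RealInnerProductSpace
noncomputable def Qpos (n : ℕ) : QuadraticForm ℝ (Fin n → ℝ) :=
  QuadraticMap.weightedSumSquares ℝ (fun _ : Fin n => (1 : ℝ))

theorem stmt7 (n : ℕ) (u v : Fin n → ℝ) :
    ι (Qpos n) u * ι (Qpos n) v = ι (Qpos n) v * ι (Qpos n) u ↔
      ((∃ c : ℝ, u = c • v) ∨ (∃ c : ℝ, v = c • u)) := by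
  constructor
  · intro h
    set Q := Qpos n with hQ
    have hpol := CliffordAlgebra.ι_mul_ι_add_swap (Q := Q) u v
    rw [← h] at hpol
    have hsq : (ι Q u * ι Q v) * (ι Q u * ι Q v) = algebraMap ℝ _ (Q u * Q v) := by
      calc (ι Q u * ι Q v) * (ι Q u * ι Q v)
          = ι Q u * (ι Q v * ι Q u) * ι Q v := by noncomm_ring
        _ = ι Q u * (ι Q u * ι Q v) * ι Q v := by rw [h]
        _ = (ι Q u * ι Q u) * (ι Q v * ι Q v) := by noncomm_ring
        _ = algebraMap ℝ _ (Q u * Q v) := by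
            rw [ι_sq_scalar, ι_sq_scalar, ← map_mul]
    have hkey : QuadraticMap.polar Q u v ^ 2 = 4 * (Q u * Q v) := by
      apply (algebraMap ℝ (CliffordAlgebra Q)).injective
      have h1 : algebraMap ℝ (CliffordAlgebra Q) (QuadraticMap.polar Q u v ^ 2)
          = (ι Q u * ι Q v + ι Q u * ι Q v) * ((ι Q u * ι Q v) + ι Q u * ι Q v) := by
        rw [hpol, ← map_mul, sq]
      have h2 : (ι Q u * ι Q v + ι Q u * ι Q v) * ((ι Q u * ι Q v) + ι Q u * ι Q v)
          = 4 * ((ι Q u * ι Q v) * (ι Q u * ι Q v)) := by noncomm_ring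
      rw [h1, h2, hsq]
      simp [map_mul, map_ofNat]
    have hq : ∀ w : Fin n → ℝ, Q w = ∑ i, w i * w i := by
      intro w; simp [hQ, Qpos, QuadraticMap.weightedSumSquares_apply]
    have hp : QuadraticMap.polar Q u v = 2 * ∑ i, u i * v i := by
      simp only [QuadraticMap.polar, hQ, Qpos, QuadraticMap.weightedSumSquares_apply, one_smul,
        Pi.add_apply, Finset.mul_sum, ← Finset.sum_sub_distrib]
      congr 1; ext i; ring
    let x : EuclideanSpace ℝ (Fin n) := WithLp.toLp 2 u
    let y : EuclideanSpace ℝ (Fin n) := WithLp.toLp 2 v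
    have hix : ∀ a b : EuclideanSpace ℝ (Fin n), ⟪a, b⟫ = ∑ i, a i * b i := by
      intro a b
      simp [PiLp.inner_apply, RCLike.inner_apply, mul_comm]
    have hcs : ‖⟪x, y⟫‖ = ‖x‖ * ‖y‖ := by
      have h1 : ⟪x, y⟫ ^ 2 = (‖x‖ * ‖y‖) ^ 2 := by
        rw [hix, mul_pow, ← real_inner_self_eq_norm_sq, ← real_inner_self_eq_norm_sq, hix, hix]
        have h3 := hkey
        rw [hp, hq u, hq v] at h3
        show (∑ i, u i * v i) ^ 2 = (∑ i, u i * u i) * ∑ i, v i * v i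
        nlinarith [h3]
      have h2 : (0:ℝ) ≤ ‖x‖ * ‖y‖ := by positivity
      rw [Real.norm_eq_abs, ← Real.sqrt_sq_eq_abs, h1, Real.sqrt_sq h2]
    rcases ((norm_inner_eq_norm_tfae (𝕜 := ℝ) x y).out 0 2).mp hcs with h0 | ⟨r, hr⟩
    · refine Or.inl ⟨0, ?_⟩
      have : u = (0 : Fin n → ℝ) := congrArg WithLp.ofLp h0
      simp [this]
    · exact Or.inr ⟨r, congrArg WithLp.ofLp hr⟩
  · rintro (⟨c, rfl⟩ | ⟨c, rfl⟩) <;>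
      simp [map_smul, smul_mul_assoc, mul_smul_comm]
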